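/- For x, y, z ∈ ℝⁿ, the triple [x,y,z] is F-right-angled in z, i.e. the 4n-ary value ⊞ applied to the tuple (x₁y₁,…,xₙyₙ, −x₁z₁,…,−xₙzₙ, −y₁z₁,…,−yₙzₙ, z₁²,…,zₙ²) equals 0, if and only if for every natural number p, Σ_{i∈[n]} (x_i^{2p+1} − z_i^{2p+1})(y_i^{2p+1} − z_i^{2p+1}) = 0. -/
import Mathlib


open Filter Finset

/-- The binary idempotent operation `⊞`. -/
noncomputable def bop (a b : ℝ) : ℝ :=
  if |b| < |a| then a else if |a| < |b| then b else (a + b) / 2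

/-- The unique real `(2p+1)`-th root of `t`. -/
noncomputable def oddRoot (p : ℕ) (t : ℝ) : ℝ :=
  Real.sign t * |t| ^ ((1 : ℝ) / (2 * (p : ℝ) + 1))

/-- `ξ_I[u](α) = Card{i ∈ I : u i = α} − Card{i ∈ I : u i = −α}`. -/
noncomputable def xiMap {ι : Type*} (I : Finset ι) (u : ι → ℝ) (α : ℝ) : ℤ :=
  ((I.filter fun i => u i = α).card : ℤ) - ((I.filter fun i => u i = -α).card : ℤ)

/-- The residual index set `J_I(u)`. -/
noncomputable def resid {ι : Type*} (I : Finset ι) (u : ι → ℝ) : Finset ι :=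
  I.filter fun i => xiMap I u (u i) ≠ 0

/-- The `n`-ary extension `⊞_{i ∈ I} u i` of the binary operation `⊞`. -/
noncomputable def Fop {ι : Type*} (I : Finset ι) (u : ι → ℝ) : ℝ :=
  if h : (resid I u).Nonempty then
    if 0 < xiMap I u ((resid I u).sup' h fun i => |u i|) then (resid I u).sup' h u
    else if xiMap I u ((resid I u).sup' h fun i => |u i|) < 0 then (resid I u).inf' h u
    else 0
  else 0

/-- The Chebyshev norm `max_{i ∈ [n]} |x i|`. -/
noncomputable def chebNorm {n : ℕ} (x : Fin n → ℝ) : ℝ := ⨆ i, |x i|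

/-- The ultrametric distance `d_⊞(x,y) = max_i |x_i ⊟ y_i|`. -/
noncomputable def dB {n : ℕ} (x y : Fin n → ℝ) : ℝ := ⨆ i, |bop (x i) (-(y i))|

/-- The 4n-ary value `⟨⟨x,y,z⟩⟩_∞` used for F-right angles. -/
noncomputable def rightAngleVal {n : ℕ} (x y z : Fin n → ℝ) : ℝ :=
  Fop (Finset.univ : Finset ((Fin n ⊕ Fin n) ⊕ (Fin n ⊕ Fin n)))
    (Sum.elim (Sum.elim (fun i => x i * y i) (fun i => -(x i * z i)))
              (Sum.elim (fun i => -(y i * z i)) (fun i => z i ^ 2)))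

section aux
variable {ι : Type*}

lemma count_val_map (C : Finset ι) (u : ι → ℝ) (α : ℝ) :
    Multiset.count α (C.val.map u) = (C.filter fun i => u i = α).card := by
  rw [Multiset.count_map]
  simp [Finset.card, Finset.filter, eq_comm]

lemma xiMap_neg (I : Finset ι) (u : ι → ℝ) (α : ℝ) : xiMap I u (-α) = - xiMap I u α := by
  unfold xiMap
  rw [neg_neg]
  ring

lemma sum_odd_pow_eq_zero (C : Finset ι) (u : ι → ℝ)
    (hc : ∀ α : ℝ, (C.filter fun i => u i = α).card = (C.filter fun i => u i = -α).card)
    (p : ℕ) : ∑ i ∈ C, u i ^ (2 * p + 1) = 0 := by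
  have hodd : Odd (2 * p + 1) := ⟨p, by ring⟩
  have hm : (C.val.map u).map Neg.neg = C.val.map u := by
    ext α
    have h1 : Multiset.count α ((C.val.map u).map Neg.neg)
        = Multiset.count (-α) (C.val.map u) := by
      have := Multiset.count_map_eq_count' (Neg.neg : ℝ → ℝ) (C.val.map u)
        neg_injective (-α)
      simpa using this
    rw [h1, count_val_map, count_val_map, ← hc α]
  have key : ∑ i ∈ C, u i ^ (2*p+1) = - ∑ i ∈ C, u i ^ (2*p+1) := by
    calc ∑ i ∈ C, u i ^ (2*p+1)
        = ((C.val.map u).map (fun t => t ^ (2*p+1))).sum := by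
          rw [Multiset.map_map]; rfl
      _ = (((C.val.map u).map Neg.neg).map (fun t => t ^ (2*p+1))).sum := by rw [hm]
      _ = (((C.val.map u).map (fun t => t ^ (2*p+1))).map Neg.neg).sum := by
          simp only [Multiset.map_map]
          exact congrArg Multiset.sum
            (Multiset.map_congr rfl fun t _ => by simp [Function.comp, hodd.neg_pow])
      _ = - ((C.val.map u).map (fun t => t^(2*p+1))).sum := by
          rw [Multiset.sum_map_neg']
      _ = - ∑ i ∈ C, u i ^ (2*p+1) := by rw [Multiset.map_map]; rfl
  linarith

lemma resid_eq_empty_iff (I : Finset ι) (u : ι → ℝ) :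
    resid I u = ∅ ↔ ∀ i ∈ I, xiMap I u (u i) = 0 := by
  simp [resid, Finset.filter_eq_empty_iff]

lemma counts_of_xi_zero (I : Finset ι) (u : ι → ℝ)
    (h : ∀ i ∈ I, xiMap I u (u i) = 0) (α : ℝ) :
    (I.filter fun i => u i = α).card = (I.filter fun i => u i = -α).card := by
  by_cases h1 : ∃ i ∈ I, u i = α
  · obtain ⟨i, hi, hui⟩ := h1
    have := h i hi; rw [hui] at this
    unfold xiMap at this; omega
  · by_cases h2 : ∃ i ∈ I, u i = -α
    · obtain ⟨i, hi, hui⟩ := h2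
      have := h i hi; rw [hui, xiMap_neg] at this
      unfold xiMap at this; omega
    · push_neg at h1 h2
      rw [Finset.filter_eq_empty_iff.mpr h1, Finset.filter_eq_empty_iff.mpr h2]
end aux

section aux2
variable {ι : Type*}

lemma xi_ne_of_abs_eq (I : Finset ι) (u : ι → ℝ) {i : ι} (hi : i ∈ resid I u) {M : ℝ}
    (hM : |u i| = M) : xiMap I u M ≠ 0 := by
  have hxi : xiMap I u (u i) ≠ 0 := (Finset.mem_filter.mp hi).2
  rcases abs_cases (u i) with ⟨he, _⟩ | ⟨he, _⟩
  · rw [he] at hM; rwa [← hM]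
  · have huv : u i = -M := by rw [← hM, he, neg_neg]
    rw [huv, xiMap_neg] at hxi
    simpa using hxi

lemma Fop_eq_zero_iff (I : Finset ι) (u : ι → ℝ) :
    Fop I u = 0 ↔ resid I u = ∅ := by
  constructor
  · intro h0
    by_contra hne
    have h : (resid I u).Nonempty := Finset.nonempty_iff_ne_empty.mpr hne
    obtain ⟨i0, hi0, hMi⟩ := Finset.exists_mem_eq_sup' h fun i => |u i|
    unfold Fop at h0
    rw [dif_pos h] at h0
    set M := (resid I u).sup' h fun i => |u i| with hMdef
    have hxi0 : xiMap I u (u i0) ≠ 0 := (Finset.mem_filter.mp hi0).2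
    have hu0 : u i0 ≠ 0 := by
      intro hz
      apply hxi0
      rw [hz]; unfold xiMap; simp
    have hMpos : 0 < M := by rw [hMi]; exact abs_pos.mpr hu0
    have hxiM : xiMap I u M ≠ 0 := xi_ne_of_abs_eq I u hi0 hMi.symm
    rcases lt_trichotomy (xiMap I u M) 0 with hlt | heq | hgt
    · rw [if_neg (by omega), if_pos hlt] at h0
      have hcard : 0 < (I.filter fun i => u i = -M).card := by
        unfold xiMap at hlt; omega
      obtain ⟨j, hj⟩ := Finset.card_pos.mp hcard
      have hjI := Finset.mem_filter.mp hj
      have hjR : j ∈ resid I u := by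
        refine Finset.mem_filter.mpr ⟨hjI.1, ?_⟩
        rw [hjI.2, xiMap_neg]; simpa using hxiM
      have hle : (resid I u).inf' h u ≤ -M := by
        rw [← hjI.2]; exact Finset.inf'_le u hjR
      rw [h0] at hle
      linarith
    · exact hxiM heq
    · rw [if_pos hgt] at h0
      have hcard : 0 < (I.filter fun i => u i = M).card := by
        unfold xiMap at hgt; omega
      obtain ⟨j, hj⟩ := Finset.card_pos.mp hcard
      have hjI := Finset.mem_filter.mp hj
      have hjR : j ∈ resid I u := by
        refine Finset.mem_filter.mpr ⟨hjI.1, ?_⟩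
        rw [hjI.2]; exact hxiM
      have hle : M ≤ (resid I u).sup' h u := by
        rw [← hjI.2]; exact Finset.le_sup' u hjR
      rw [h0] at hle
      linarith
  · intro he
    unfold Fop
    rw [dif_neg (by simp [he])]
end aux2

section aux3
variable {ι : Type*}

lemma exists_sum_ne_zero (I : Finset ι) (u : ι → ℝ) (h : (resid I u).Nonempty) :
    ∃ p : ℕ, ∑ i ∈ I, u i ^ (2 * p + 1) ≠ 0 := by
  classical
  obtain ⟨i0, hi0, hMi⟩ := Finset.exists_mem_eq_sup' h fun i => |u i|
  set M := (resid I u).sup' h fun i => |u i| with hMdef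
  have hxi0 : xiMap I u (u i0) ≠ 0 := (Finset.mem_filter.mp hi0).2
  have hu0 : u i0 ≠ 0 := by
    intro hz; apply hxi0; rw [hz]; unfold xiMap; simp
  have hMpos : 0 < M := by rw [hMi]; exact abs_pos.mpr hu0
  have hxiM : xiMap I u M ≠ 0 := xi_ne_of_abs_eq I u hi0 hMi.symm
  -- decomposition of the total sum
  have hsplit1 : ∀ p : ℕ, ∑ i ∈ I, u i ^ (2*p+1)
      = ∑ i ∈ resid I u, u i ^ (2*p+1)
        + ∑ i ∈ I.filter (fun i => ¬ xiMap I u (u i) ≠ 0), u i ^ (2*p+1) := by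
    intro p
    rw [← Finset.sum_filter_add_sum_filter_not I (fun i => xiMap I u (u i) ≠ 0)]
    rfl
  -- complement sum vanishes
  have hcomp : ∀ p : ℕ,
      ∑ i ∈ I.filter (fun i => ¬ xiMap I u (u i) ≠ 0), u i ^ (2*p+1) = 0 := by
    intro p
    apply sum_odd_pow_eq_zero
    intro α
    by_cases hα : xiMap I u α = 0
    · have hα' : xiMap I u (-α) = 0 := by rw [xiMap_neg, hα, neg_zero]
      have e1 : ((I.filter fun i => ¬ xiMap I u (u i) ≠ 0).filter fun i => u i = α)
          = I.filter fun i => u i = α := by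
        ext i
        simp only [Finset.mem_filter, not_not]
        exact ⟨fun ⟨⟨hiI, _⟩, hv⟩ => ⟨hiI, hv⟩,
          fun ⟨hiI, hv⟩ => ⟨⟨hiI, by rw [hv]; exact hα⟩, hv⟩⟩
      have e2 : ((I.filter fun i => ¬ xiMap I u (u i) ≠ 0).filter fun i => u i = -α)
          = I.filter fun i => u i = -α := by
        ext i
        simp only [Finset.mem_filter, not_not]
        exact ⟨fun ⟨⟨hiI, _⟩, hv⟩ => ⟨hiI, hv⟩,
          fun ⟨hiI, hv⟩ => ⟨⟨hiI, by rw [hv]; exact hα'⟩, hv⟩⟩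
      rw [e1, e2]
      unfold xiMap at hα; omega
    · have hα' : xiMap I u (-α) ≠ 0 := by rw [xiMap_neg]; simpa using hα
      have e1 : ((I.filter fun i => ¬ xiMap I u (u i) ≠ 0).filter fun i => u i = α)
          = ∅ := by
        apply Finset.filter_eq_empty_iff.mpr
        intro i hi hv
        have := (Finset.mem_filter.mp hi).2
        rw [not_not, hv] at this
        exact hα this
      have e2 : ((I.filter fun i => ¬ xiMap I u (u i) ≠ 0).filter fun i => u i = -α)
          = ∅ := by
        apply Finset.filter_eq_empty_iff.mpr
        intro i hi hv
        have := (Finset.mem_filter.mp hi).2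
        rw [not_not, hv] at this
        exact hα' this
      rw [e1, e2]
  -- the top part of the residual sum
  have hAeq : ((resid I u).filter fun i => |u i| = M)
      = (I.filter fun i => u i = M) ∪ (I.filter fun i => u i = -M) := by
    ext i
    simp only [Finset.mem_filter, Finset.mem_union, resid]
    constructor
    · rintro ⟨⟨hiI, _⟩, habs⟩
      rcases abs_cases (u i) with ⟨he, _⟩ | ⟨he, _⟩
      · exact Or.inl ⟨hiI, by rw [← he, habs]⟩
      · exact Or.inr ⟨hiI, by rw [← neg_neg (u i), ← he, habs]⟩
    · rintro (⟨hiI, hv⟩ | ⟨hiI, hv⟩)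
      · exact ⟨⟨hiI, by rw [hv]; exact hxiM⟩, by rw [hv, abs_of_pos hMpos]⟩
      · refine ⟨⟨hiI, ?_⟩, by rw [hv, abs_neg, abs_of_pos hMpos]⟩
        rw [hv, xiMap_neg]; simpa using hxiM
  have hdisj : Disjoint (I.filter fun i => u i = M) (I.filter fun i => u i = -M) := by
    rw [Finset.disjoint_left]
    intro i h1 h2
    have e1 := (Finset.mem_filter.mp h1).2
    have e2 := (Finset.mem_filter.mp h2).2
    rw [e1] at e2
    linarith
  have htop : ∀ p : ℕ, ∑ i ∈ (resid I u).filter (fun i => |u i| = M), u i ^ (2*p+1)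
      = (xiMap I u M : ℝ) * M ^ (2*p+1) := by
    intro p
    have hodd : Odd (2*p+1) := ⟨p, by ring⟩
    rw [hAeq, Finset.sum_union hdisj]
    have s1 : ∑ i ∈ I.filter (fun i => u i = M), u i ^ (2*p+1)
        = (I.filter fun i => u i = M).card * M ^ (2*p+1) := by
      rw [Finset.sum_congr rfl (fun i hi => by rw [(Finset.mem_filter.mp hi).2])]
      rw [Finset.sum_const, nsmul_eq_mul]
    have s2 : ∑ i ∈ I.filter (fun i => u i = -M), u i ^ (2*p+1)
        = -((I.filter fun i => u i = -M).card * M ^ (2*p+1)) := by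
      rw [Finset.sum_congr rfl (fun i hi => by rw [(Finset.mem_filter.mp hi).2])]
      rw [Finset.sum_const, nsmul_eq_mul, hodd.neg_pow]
      ring
    rw [s1, s2]
    unfold xiMap
    push_cast
    ring
  -- full residual decomposition
  have hsplit2 : ∀ p : ℕ, ∑ i ∈ I, u i ^ (2*p+1)
      = (xiMap I u M : ℝ) * M ^ (2*p+1)
        + ∑ i ∈ (resid I u).filter (fun i => ¬ |u i| = M), u i ^ (2*p+1) := by
    intro p
    rw [hsplit1 p, hcomp p, add_zero,
      ← Finset.sum_filter_add_sum_filter_not (resid I u) (fun i => |u i| = M), htop p]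
  have hone : (1:ℝ) ≤ |((xiMap I u M : ℤ) : ℝ)| := by
    rw [← Int.cast_abs]
    exact_mod_cast Int.one_le_abs hxiM
  set Rr := (resid I u).filter (fun i => ¬ |u i| = M) with hRr
  by_cases hRne : Rr.Nonempty
  · -- pick a good exponent
    obtain ⟨j0, hj0, hM'⟩ := Finset.exists_mem_eq_sup' hRne fun i => |u i|
    set M' := Rr.sup' hRne fun i => |u i| with hM'def
    have hM'nonneg : 0 ≤ M' := by rw [hM']; exact abs_nonneg _
    have hM'lt : M' < M := by
      have hle : |u j0| ≤ M := Finset.le_sup' (fun i => |u i|) (Finset.mem_filter.mp hj0).1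
      have hne' : ¬ |u j0| = M := (Finset.mem_filter.mp hj0).2
      rw [hM']
      exact lt_of_le_of_ne hle hne'
    set r : ℝ := M' / M with hr
    have hr0 : 0 ≤ r := div_nonneg hM'nonneg hMpos.le
    have hr1 : r < 1 := (div_lt_one hMpos).mpr hM'lt
    obtain ⟨m, hm⟩ := exists_pow_lt_of_lt_one
      (show (0:ℝ) < 1 / (Rr.card + 1) by positivity) hr1
    refine ⟨m, ?_⟩
    rw [hsplit2 m]
    set k := 2*m+1 with hk
    have hrk : r ^ k ≤ r ^ m := pow_le_pow_of_le_one hr0 hr1.le (by omega)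
    have hbound : |∑ i ∈ Rr, u i ^ k| ≤ Rr.card * M' ^ k := by
      calc |∑ i ∈ Rr, u i ^ k| ≤ ∑ i ∈ Rr, |u i ^ k| := Finset.abs_sum_le_sum_abs _ _
        _ ≤ ∑ i ∈ Rr, M' ^ k := by
            apply Finset.sum_le_sum
            intro i hi
            rw [abs_pow]
            exact pow_le_pow_left₀ (abs_nonneg _) (Finset.le_sup' (fun i => |u i|) hi) k
        _ = Rr.card * M' ^ k := by rw [Finset.sum_const, nsmul_eq_mul]
    have hMk : (0:ℝ) < M ^ k := pow_pos hMpos k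
    have hM'k : M' ^ k = r ^ k * M ^ k := by
      rw [hr, div_pow, div_mul_cancel₀]
      exact pow_ne_zero k hMpos.ne'
    have hsmall : (Rr.card : ℝ) * M' ^ k < M ^ k := by
      rw [hM'k]
      have h1 : (Rr.card : ℝ) * r ^ k ≤ (Rr.card : ℝ) * r ^ m :=
        mul_le_mul_of_nonneg_left hrk (Nat.cast_nonneg _)
      have h2 : (Rr.card : ℝ) * r ^ m < 1 := by
        have hmul := mul_lt_mul_of_pos_left hm
          (show (0:ℝ) < (Rr.card : ℝ) + 1 by positivity)
        have heq1 : ((Rr.card : ℝ) + 1) * (1 / ((Rr.card : ℝ) + 1)) = 1 := by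
          field_simp
        have hrm : (0:ℝ) ≤ r ^ m := pow_nonneg hr0 m
        nlinarith
      nlinarith
    intro hcon
    have heq2 : ∑ i ∈ Rr, u i ^ k = -((xiMap I u M : ℝ) * M ^ k) := by linarith
    rw [heq2, abs_neg, abs_mul, abs_of_pos hMk] at hbound
    nlinarith
  · refine ⟨0, ?_⟩
    rw [hsplit2 0]
    rw [Finset.not_nonempty_iff_eq_empty.mp hRne, Finset.sum_empty, add_zero]
    have : ((xiMap I u M : ℤ) : ℝ) ≠ 0 := by exact_mod_cast hxiM
    positivity
end aux3


section main

/-- `[x,y,z]` is F-right-angled in `z` iff it is `φ_p`-right-angled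
in `z` for every `p`. -/
theorem stmt13 (n : ℕ) (x y z : Fin n → ℝ) :
    rightAngleVal x y z = 0 ↔
      ∀ p : ℕ, ∑ i, (x i ^ (2 * p + 1) - z i ^ (2 * p + 1))
          * (y i ^ (2 * p + 1) - z i ^ (2 * p + 1)) = 0 := by
  classical
  set U : (Fin n ⊕ Fin n) ⊕ (Fin n ⊕ Fin n) → ℝ :=
    Sum.elim (Sum.elim (fun i => x i * y i) (fun i => -(x i * z i)))
             (Sum.elim (fun i => -(y i * z i)) (fun i => z i ^ 2)) with hU
  have hsum : ∀ p : ℕ, ∑ i, U i ^ (2*p+1)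
      = ∑ i, (x i ^ (2 * p + 1) - z i ^ (2 * p + 1))
          * (y i ^ (2 * p + 1) - z i ^ (2 * p + 1)) := by
    intro p
    have hodd : Odd (2*p+1) := ⟨p, by ring⟩
    have e : ∀ i : Fin n,
        (x i ^ (2*p+1) - z i ^ (2*p+1)) * (y i ^ (2*p+1) - z i ^ (2*p+1))
        = (x i * y i)^(2*p+1) + (-(x i * z i))^(2*p+1)
          + ((-(y i * z i))^(2*p+1) + (z i ^ 2)^(2*p+1)) := by
      intro i
      rw [hodd.neg_pow, hodd.neg_pow]
      ring
    calc ∑ i, U i ^ (2*p+1)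
        = (∑ i, (x i * y i)^(2*p+1) + ∑ i, (-(x i * z i))^(2*p+1))
          + (∑ i, (-(y i * z i))^(2*p+1) + ∑ i, (z i ^ 2)^(2*p+1)) := by
          rw [Fintype.sum_sum_type, Fintype.sum_sum_type, Fintype.sum_sum_type]
          simp only [hU, Sum.elim_inl, Sum.elim_inr]
      _ = ∑ i, ((x i * y i)^(2*p+1) + (-(x i * z i))^(2*p+1)
          + ((-(y i * z i))^(2*p+1) + (z i ^ 2)^(2*p+1))) := by
          rw [Finset.sum_add_distrib, Finset.sum_add_distrib, Finset.sum_add_distrib]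
      _ = ∑ i, (x i ^ (2*p+1) - z i ^ (2*p+1)) * (y i ^ (2*p+1) - z i ^ (2*p+1)) :=
          Finset.sum_congr rfl (fun i _ => (e i).symm)
  have hval : rightAngleVal x y z = Fop Finset.univ U := rfl
  rw [hval, Fop_eq_zero_iff]
  constructor
  · intro he p
    rw [← hsum p]
    exact sum_odd_pow_eq_zero _ _
      (counts_of_xi_zero _ _ ((resid_eq_empty_iff _ _).mp he)) p
  · intro hp
    by_contra hne
    obtain ⟨p, hp'⟩ := exists_sum_ne_zero _ _ (Finset.nonempty_iff_ne_empty.mpr hne)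
    apply hp'
    rw [hsum p]
    exact hp p

end main
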